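/- arXiv:2002.01040 — 2 statements merged into one kernel-verified Lean document; each statement's English description precedes it below -/
import Mathlib

section
/- Let p, q be positive integers, let μ ∈ ℝᵖ, η ∈ ℝ^q, let Σ be a positive definite p×p real matrix, let Ω be a positive definite q×q real matrix, and let A be a p×q real matrix. Set Λ := (Ω⁻¹ + AᵀΣ⁻¹A)⁻¹ (which exists since Ω⁻¹ + AᵀΣ⁻¹A is positive definite). Then for all y ∈ ℝᵖ and x ∈ ℝ^q, φ_p(y; μ + A x, Σ) · φ_q(x; η, Ω) = φ_p(y; μ + A η, Σ + A Ω Aᵀ) · φ_q(x; η + Λ Aᵀ Σ⁻¹ (y − μ − A η), Λ). -/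
open MeasureTheory Matrix Real Set

/-- The `p`-variate normal density with mean `μ` and covariance matrix `S`. -/
noncomputable def gaussPdf {p : ℕ} (μ : Fin p → ℝ) (S : Matrix (Fin p) (Fin p) ℝ)
    (x : Fin p → ℝ) : ℝ :=
  (2 * Real.pi) ^ (-(p : ℝ) / 2) * S.det ^ (-(1 : ℝ) / 2) *
    Real.exp (-(1 / 2) * ((x - μ) ⬝ᵥ (S⁻¹ *ᵥ (x - μ))))

private lemma dot_symm {n : ℕ} (M : Matrix (Fin n) (Fin n) ℝ) (hM : Mᵀ = M)
    (a b : Fin n → ℝ) : a ⬝ᵥ (M *ᵥ b) = b ⬝ᵥ (M *ᵥ a) := by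
  rw [Matrix.dotProduct_mulVec, ← Matrix.mulVec_transpose, hM, dotProduct_comm]

private lemma mulVec_dot {p q : ℕ} (A : Matrix (Fin p) (Fin q) ℝ)
    (u : Fin q → ℝ) (w : Fin p → ℝ) : (A *ᵥ u) ⬝ᵥ w = u ⬝ᵥ (Aᵀ *ᵥ w) := by
  rw [dotProduct_comm, Matrix.dotProduct_mulVec, ← Matrix.mulVec_transpose,
    dotProduct_comm]

private lemma expand_sub {n : ℕ} (M : Matrix (Fin n) (Fin n) ℝ) (a b : Fin n → ℝ) :
    (a - b) ⬝ᵥ M *ᵥ (a - b)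
      = a ⬝ᵥ M *ᵥ a - a ⬝ᵥ M *ᵥ b - b ⬝ᵥ M *ᵥ a + b ⬝ᵥ M *ᵥ b := by
  rw [Matrix.mulVec_sub, dotProduct_sub, sub_dotProduct,
    sub_dotProduct]
  ring

private lemma assemble (cp cq ds dO ds' dL e1 e2 e1' e2' : ℝ)
    (hd : ds * dO = ds' * dL) (he : e1 * e2 = e1' * e2') :
    cp * ds * e1 * (cq * dO * e2) = cp * ds' * e1' * (cq * dL * e2') := by
  calc cp * ds * e1 * (cq * dO * e2) = cp * cq * (ds * dO) * (e1 * e2) := by ring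
    _ = cp * cq * (ds' * dL) * (e1' * e2') := by rw [hd, he]
    _ = cp * ds' * e1' * (cq * dL * e2') := by ring

theorem stmt2 (p q : ℕ) (hp : 0 < p) (hq : 0 < q)
    (μ : Fin p → ℝ) (η : Fin q → ℝ)
    (S : Matrix (Fin p) (Fin p) ℝ) (hS : S.PosDef)
    (Ω : Matrix (Fin q) (Fin q) ℝ) (hΩ : Ω.PosDef)
    (A : Matrix (Fin p) (Fin q) ℝ)
    (Λ : Matrix (Fin q) (Fin q) ℝ) (hΛ : Λ = (Ω⁻¹ + Aᵀ * S⁻¹ * A)⁻¹) :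
    ∀ (y : Fin p → ℝ) (x : Fin q → ℝ),
      gaussPdf (μ + A *ᵥ x) S y * gaussPdf η Ω x
        = gaussPdf (μ + A *ᵥ η) (S + A * Ω * Aᵀ) y *
          gaussPdf (η + Λ *ᵥ (Aᵀ *ᵥ (S⁻¹ *ᵥ (y - μ - A *ᵥ η)))) Λ x := by
  intro y x
  -- basic positivity / invertibility facts
  have hSi : (S⁻¹).PosDef := hS.inv
  have hΩi : (Ω⁻¹).PosDef := hΩ.inv
  have symSi : (S⁻¹)ᵀ = S⁻¹ := by
    have := hSi.isHermitian
    rwa [Matrix.IsHermitian, conjTranspose_eq_transpose_of_trivial] at this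
  have hAtSA : (Aᵀ * S⁻¹ * A).PosSemidef := by
    have := hSi.posSemidef.conjTranspose_mul_mul_same A
    rwa [conjTranspose_eq_transpose_of_trivial] at this
  have hL : (Ω⁻¹ + Aᵀ * S⁻¹ * A).PosDef := hΩi.add_posSemidef hAtSA
  have hΛpd : Λ.PosDef := hΛ ▸ hL.inv
  have hAΩA : (A * Ω * Aᵀ).PosSemidef := by
    have := hΩ.posSemidef.mul_mul_conjTranspose_same A
    rwa [conjTranspose_eq_transpose_of_trivial] at this
  have hBig : (S + A * Ω * Aᵀ).PosDef := hS.add_posSemidef hAΩA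
  have hSd : IsUnit S.det := hS.det_pos.ne'.isUnit
  have hΩd : IsUnit Ω.det := hΩ.det_pos.ne'.isUnit
  have hLd : IsUnit (Ω⁻¹ + Aᵀ * S⁻¹ * A).det := hL.det_pos.ne'.isUnit
  have hΛd : IsUnit Λ.det := hΛpd.det_pos.ne'.isUnit
  have hΛinv : Λ⁻¹ = Ω⁻¹ + Aᵀ * S⁻¹ * A := by
    rw [hΛ, Matrix.nonsing_inv_nonsing_inv _ hLd]
  have symΛinv : (Λ⁻¹)ᵀ = Λ⁻¹ := by
    have := hΛpd.inv.isHermitian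
    rwa [Matrix.IsHermitian, conjTranspose_eq_transpose_of_trivial] at this
  -- abbreviations
  set z : Fin p → ℝ := y - μ - A *ᵥ η with hzdef
  set t : Fin q → ℝ := Aᵀ *ᵥ (S⁻¹ *ᵥ z) with htdef
  set m : Fin q → ℝ := Λ *ᵥ t with hmdef
  set u : Fin q → ℝ := x - η with hudef
  have hz : y - (μ + A *ᵥ x) = z - A *ᵥ u := by
    rw [hzdef, hudef, Matrix.mulVec_sub]; abel
  have hx : x - (η + m) = u - m := by rw [hudef]; abel
  -- Woodbury
  have hw : (S + A * Ω * Aᵀ)⁻¹ = S⁻¹ - S⁻¹ * A * Λ * Aᵀ * S⁻¹ := by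
    rw [Matrix.add_mul_mul_inv_eq_sub S A Ω Aᵀ hS.isUnit hΩ.isUnit
      (by rwa [(Matrix.isUnit_iff_isUnit_det _)]), hΛ]
  -- quadratic form expansions
  have c2 : (A *ᵥ u) ⬝ᵥ S⁻¹ *ᵥ z = u ⬝ᵥ t := by rw [mulVec_dot, htdef]
  have c1 : z ⬝ᵥ S⁻¹ *ᵥ (A *ᵥ u) = u ⬝ᵥ t := by rw [dot_symm _ symSi, c2]
  have c3 : (A *ᵥ u) ⬝ᵥ S⁻¹ *ᵥ (A *ᵥ u) = u ⬝ᵥ ((Aᵀ * S⁻¹ * A) *ᵥ u) := by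
    rw [mulVec_dot, Matrix.mulVec_mulVec, Matrix.mulVec_mulVec]
  have e1 : (z - A *ᵥ u) ⬝ᵥ S⁻¹ *ᵥ (z - A *ᵥ u)
      = z ⬝ᵥ S⁻¹ *ᵥ z - 2 * (u ⬝ᵥ t) + u ⬝ᵥ ((Aᵀ * S⁻¹ * A) *ᵥ u) := by
    rw [expand_sub, c1, c2, c3]; ring
  have e2 : u ⬝ᵥ ((Aᵀ * S⁻¹ * A) *ᵥ u) + u ⬝ᵥ Ω⁻¹ *ᵥ u = u ⬝ᵥ Λ⁻¹ *ᵥ u := by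
    rw [hΛinv, Matrix.add_mulVec, dotProduct_add]; ring
  have hLm : Λ⁻¹ *ᵥ m = t := by
    rw [hmdef, Matrix.mulVec_mulVec, Matrix.nonsing_inv_mul _ hΛd, Matrix.one_mulVec]
  have e3 : (u - m) ⬝ᵥ Λ⁻¹ *ᵥ (u - m)
      = u ⬝ᵥ Λ⁻¹ *ᵥ u - 2 * (u ⬝ᵥ t) + t ⬝ᵥ m := by
    have d1 : u ⬝ᵥ Λ⁻¹ *ᵥ m = u ⬝ᵥ t := by rw [hLm]
    have d2 : m ⬝ᵥ Λ⁻¹ *ᵥ u = u ⬝ᵥ t := by rw [dot_symm _ symΛinv, hLm]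
    have d3 : m ⬝ᵥ Λ⁻¹ *ᵥ m = t ⬝ᵥ m := by rw [hLm, dotProduct_comm]
    rw [expand_sub, d1, d2, d3]; ring
  have e4 : z ⬝ᵥ (S + A * Ω * Aᵀ)⁻¹ *ᵥ z = z ⬝ᵥ S⁻¹ *ᵥ z - t ⬝ᵥ m := by
    have g1 : (S⁻¹ * A * Λ * Aᵀ * S⁻¹) *ᵥ z = S⁻¹ *ᵥ (A *ᵥ m) := by
      rw [← Matrix.mulVec_mulVec, ← Matrix.mulVec_mulVec, ← Matrix.mulVec_mulVec,
        ← Matrix.mulVec_mulVec]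
    have g2 : z ⬝ᵥ S⁻¹ *ᵥ (A *ᵥ m) = t ⬝ᵥ m := by
      rw [dot_symm _ symSi, mulVec_dot, dotProduct_comm, dotProduct_comm t m,
        htdef]
    rw [hw, Matrix.sub_mulVec, dotProduct_sub, g1, g2]
  -- the key quadratic identity
  have key : (y - (μ + A *ᵥ x)) ⬝ᵥ S⁻¹ *ᵥ (y - (μ + A *ᵥ x)) + (x - η) ⬝ᵥ Ω⁻¹ *ᵥ (x - η)
      = (y - (μ + A *ᵥ η)) ⬝ᵥ (S + A * Ω * Aᵀ)⁻¹ *ᵥ (y - (μ + A *ᵥ η))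
        + (x - (η + m)) ⬝ᵥ Λ⁻¹ *ᵥ (x - (η + m)) := by
    have hz' : y - (μ + A *ᵥ η) = z := by rw [hzdef]; abel
    rw [hz, hz', hx, ← hudef, e1, e3, e4]
    linarith [e2]
  -- the determinant identity
  have hdetmul : S.det * Ω.det = (S + A * Ω * Aᵀ).det * Λ.det := by
    have h1 : S + A * Ω * Aᵀ = S * (1 + S⁻¹ * A * Ω * Aᵀ) := by
      rw [Matrix.mul_add, mul_one]
      congr 1
      rw [show S * (S⁻¹ * A * Ω * Aᵀ) = S * S⁻¹ * (A * Ω * Aᵀ) by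
        simp only [Matrix.mul_assoc], Matrix.mul_nonsing_inv _ hSd, Matrix.one_mul]
    have h2 : (1 : Matrix (Fin q) (Fin q) ℝ) + Aᵀ * (S⁻¹ * A * Ω)
        = (Ω⁻¹ + Aᵀ * S⁻¹ * A) * Ω := by
      rw [Matrix.add_mul, Matrix.nonsing_inv_mul _ hΩd]
      simp only [Matrix.mul_assoc]
    have h3 : (S + A * Ω * Aᵀ).det
        = S.det * ((Ω⁻¹ + Aᵀ * S⁻¹ * A).det * Ω.det) := by
      rw [h1, Matrix.det_mul,
        show S⁻¹ * A * Ω * Aᵀ = (S⁻¹ * A * Ω) * Aᵀ by simp only [Matrix.mul_assoc],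
        Matrix.det_one_add_mul_comm, h2, Matrix.det_mul]
    have h4 : Λ.det = ((Ω⁻¹ + Aᵀ * S⁻¹ * A).det)⁻¹ := by
      rw [hΛ, Matrix.det_nonsing_inv, Ring.inverse_eq_inv']
    have hne : (Ω⁻¹ + Aᵀ * S⁻¹ * A).det ≠ 0 := hL.det_pos.ne'
    rw [h3, h4, show S.det * ((Ω⁻¹ + Aᵀ * S⁻¹ * A).det * Ω.det) * ((Ω⁻¹ + Aᵀ * S⁻¹ * A).det)⁻¹
        = S.det * Ω.det * ((Ω⁻¹ + Aᵀ * S⁻¹ * A).det * ((Ω⁻¹ + Aᵀ * S⁻¹ * A).det)⁻¹) from by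
        ring, mul_inv_cancel₀ hne, mul_one]
  unfold gaussPdf
  refine assemble _ _ _ _ _ _ _ _ _ _ ?_ ?_
  · rw [← Real.mul_rpow hS.det_pos.le hΩ.det_pos.le,
      ← Real.mul_rpow hBig.det_pos.le hΛpd.det_pos.le, hdetmul]
  · rw [← Real.exp_add, ← Real.exp_add]
    congr 1
    linarith [key]
end

section
/- Let p be a positive integer, let λ ∈ ℝᵖ, and set δ := λ/√(1 + λᵀλ). Then for every s ∈ ℝᵖ, ∫_{ℝᵖ} exp(sᵀz) · 2 φ_p(z; 0, I_p) Φ(λᵀ z) dz = 2 exp(½ sᵀs) Φ(δᵀ s); that is, the moment generating function of the standardized p-variate skew-normal distribution with density 2 φ_p(z; 0, I_p) Φ(λᵀ z) equals M(s) = 2 exp(½ sᵀs) Φ(δᵀ s). -/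
open MeasureTheory Matrix Real Set

/-- The standard normal cumulative distribution function `Φ`. -/
noncomputable def stdNormCdf (x : ℝ) : ℝ :=
  ∫ t in Set.Iic x, (2 * Real.pi) ^ (-(1 : ℝ) / 2) * Real.exp (-t ^ 2 / 2)

noncomputable def npdf (t : ℝ) : ℝ :=
  (2 * Real.pi) ^ (-(1 : ℝ) / 2) * Real.exp (-t ^ 2 / 2)

lemma rpow_half_eq : (2 * Real.pi) ^ (-(1 : ℝ) / 2) = (Real.sqrt (2 * Real.pi))⁻¹ := by
  rw [Real.sqrt_eq_rpow, ← Real.rpow_neg_one ((2 * Real.pi) ^ ((1:ℝ)/2)),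
    ← Real.rpow_mul (by positivity)]
  norm_num

lemma npdf_nonneg (t : ℝ) : 0 ≤ npdf t := by unfold npdf; positivity

lemma npdf_cont : Continuous npdf := by
  unfold npdf; fun_prop

lemma int_npdf : Integrable npdf := by
  have : Integrable (fun t : ℝ => Real.exp (-(1/2 : ℝ) * t ^ 2)) := integrable_exp_neg_mul_sq (by norm_num)
  have h := this.const_mul ((2 * Real.pi) ^ (-(1 : ℝ) / 2))
  refine h.congr (Filter.Eventually.of_forall fun t => ?_)
  unfold npdf; ring_nf

lemma integral_npdf : ∫ t, npdf t = 1 := by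
  unfold npdf
  rw [integral_const_mul _ _]
  have : ∀ t : ℝ, Real.exp (-t ^ 2 / 2) = Real.exp (-(1/2 : ℝ) * t ^ 2) := by
    intro t; ring_nf
  simp_rw [this, integral_gaussian, rpow_half_eq]
  rw [show Real.pi / (1/2) = 2 * Real.pi by ring]
  rw [inv_mul_cancel₀ (by positivity)]
lemma stdNormCdf_eq (x : ℝ) : stdNormCdf x = ∫ t in Set.Iic x, npdf t := rfl

lemma stdNormCdf_nonneg (x : ℝ) : 0 ≤ stdNormCdf x := by
  rw [stdNormCdf_eq]
  exact setIntegral_nonneg measurableSet_Iic fun t _ => npdf_nonneg t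

lemma stdNormCdf_le_one (x : ℝ) : stdNormCdf x ≤ 1 := by
  rw [stdNormCdf_eq, ← integral_npdf]
  exact setIntegral_le_integral int_npdf (Filter.Eventually.of_forall npdf_nonneg)

lemma stdNormCdf_mono : Monotone stdNormCdf := by
  intro a b hab
  rw [stdNormCdf_eq, stdNormCdf_eq]
  exact setIntegral_mono_set int_npdf.integrableOn
    (Filter.Eventually.of_forall npdf_nonneg)
    (HasSubset.Subset.eventuallyLE (Iic_subset_Iic.2 hab))

lemma stdNormCdf_measurable : Measurable stdNormCdf :=
  stdNormCdf_mono.measurable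

lemma conv_npdf (b v : ℝ) :
    ∫ t : ℝ, npdf t * npdf (v + b * t)
      = (Real.sqrt (1 + b ^ 2))⁻¹ * npdf (v / Real.sqrt (1 + b ^ 2)) := by
  have hb2 : (0:ℝ) < 1 + b ^ 2 := by positivity
  set σ := Real.sqrt (1 + b ^ 2) with hσ
  have hσpos : 0 < σ := Real.sqrt_pos.2 hb2
  have hσ2 : σ ^ 2 = 1 + b ^ 2 := Real.sq_sqrt hb2.le
  have hpt : ∀ t : ℝ, npdf t * npdf (v + b * t)
      = ((2*Real.pi)^(-(1:ℝ)/2) * (2*Real.pi)^(-(1:ℝ)/2) * Real.exp (-(v/σ)^2/2))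
        * Real.exp (-((1+b^2)/2) * (t + b*v/(1+b^2)) ^ 2) := by
    intro t
    unfold npdf
    have hexp : -t^2/2 + -(v + b*t)^2/2
        = -(v/σ)^2/2 + (-((1+b^2)/2) * (t + b*v/(1+b^2))^2) := by
      rw [div_pow, hσ2]
      field_simp
      ring
    rw [mul_mul_mul_comm, ← Real.exp_add, hexp, Real.exp_add]
    ring
  simp_rw [hpt]
  rw [integral_const_mul _ _]
  rw [integral_add_right_eq_self (fun t => Real.exp (-((1+b^2)/2) * t^2)) (b*v/(1+b^2))]
  rw [integral_gaussian]
  have h1 : Real.pi / ((1+b^2)/2) = 2 * Real.pi / σ^2 := by rw [hσ2]; field_simp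
  rw [h1, Real.sqrt_div' (2*Real.pi) ?hsq]
  case hsq => exact hσ2 ▸ hb2.le
  rw [Real.sqrt_sq hσpos.le]
  unfold npdf
  rw [rpow_half_eq]
  have h2 : Real.sqrt (2 * Real.pi) ≠ 0 := by positivity
  field_simp

lemma shift_Iic (f : ℝ → ℝ) (c d : ℝ) :
    ∫ u in Set.Iic c, f u = ∫ v in Set.Iic (c - d), f (v + d) := by
  rw [← integral_indicator measurableSet_Iic, ← integral_indicator measurableSet_Iic,
    ← integral_add_right_eq_self (fun u => (Set.Iic c).indicator f u) d]
  congr 1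
  funext v
  by_cases h : v ≤ c - d
  · rw [Set.indicator_of_mem (by simp only [Set.mem_Iic]; linarith) f,
      Set.indicator_of_mem (Set.mem_Iic.2 h)]
  · rw [Set.indicator_of_notMem (by simp only [Set.mem_Iic]; intro hc; exact h (by linarith)) f,
      Set.indicator_of_notMem (fun hc => h (Set.mem_Iic.1 hc))]

lemma cdf_scale (a σ : ℝ) (hσ : 0 < σ) :
    ∫ v in Set.Iic a, σ⁻¹ * npdf (v / σ) = stdNormCdf (a / σ) := by
  have hiff : ∀ v : ℝ, σ⁻¹ * v ≤ a / σ ↔ v ≤ a := by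
    intro v
    rw [div_eq_inv_mul]
    exact mul_le_mul_iff_right₀ (inv_pos.2 hσ)
  rw [← integral_indicator measurableSet_Iic]
  have hpt : ∀ v : ℝ, (Set.Iic a).indicator (fun v => σ⁻¹ * npdf (v / σ)) v
      = σ⁻¹ * (Set.Iic (a / σ)).indicator npdf (σ⁻¹ * v) := by
    intro v
    by_cases h : v ≤ a
    · rw [Set.indicator_of_mem (Set.mem_Iic.2 h),
        Set.indicator_of_mem (Set.mem_Iic.2 ((hiff v).2 h))]
      rw [div_eq_inv_mul]
    · rw [Set.indicator_of_notMem (fun hc => h (Set.mem_Iic.1 hc)),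
        Set.indicator_of_notMem (fun hc => h ((hiff v).1 (Set.mem_Iic.1 hc)))]
      ring
  simp_rw [hpt]
  rw [integral_const_mul _ _, MeasureTheory.Measure.integral_comp_mul_left ((Set.Iic (a / σ)).indicator npdf) σ⁻¹,
    inv_inv, abs_of_pos hσ, stdNormCdf_eq, ← integral_indicator measurableSet_Iic,
    smul_eq_mul, ← mul_assoc, inv_mul_cancel₀ hσ.ne', one_mul]

lemma shear_mp (b : ℝ) :
    MeasurePreserving (fun q : ℝ × ℝ => (q.1, q.2 + b * q.1))
      ((volume : Measure ℝ).prod volume) ((volume : Measure ℝ).prod volume) := by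
  refine (MeasurePreserving.id volume).skew_product (g := fun t v => v + b * t) ?_ ?_
  · fun_prop
  · exact Filter.Eventually.of_forall fun t => map_add_right_eq_self volume (b * t)

lemma int_conv (b : ℝ) :
    Integrable (fun q : ℝ × ℝ => npdf q.1 * npdf (q.2 + b * q.1))
      ((volume : Measure ℝ).prod volume) := by
  have h : Integrable (fun q : ℝ × ℝ => npdf q.1 * npdf q.2)
      ((volume : Measure ℝ).prod volume) := int_npdf.mul_prod int_npdf
  have := (shear_mp b).integrable_comp (f := fun q : ℝ × ℝ => (q.1, q.2 + b * q.1))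
    (g := fun q : ℝ × ℝ => npdf q.1 * npdf q.2) ?_
  · exact this.2 h
  · exact ((npdf_cont.comp continuous_fst).mul (npdf_cont.comp continuous_snd)).aestronglyMeasurable

lemma key1 (a b : ℝ) :
    ∫ t : ℝ, npdf t * stdNormCdf (a + b * t)
      = stdNormCdf (a / Real.sqrt (1 + b ^ 2)) := by
  have hstep : ∀ t : ℝ, npdf t * stdNormCdf (a + b * t)
      = ∫ v in Set.Iic a, npdf t * npdf (v + b * t) := by
    intro t
    rw [stdNormCdf_eq, shift_Iic npdf (a + b * t) (b * t)]
    simp only [add_sub_cancel_right]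
    rw [← integral_const_mul]
  simp_rw [hstep]
  have h1 : (volume : Measure ℝ).prod (volume.restrict (Set.Iic a))
      = ((volume : Measure ℝ).prod volume).restrict (Set.univ ×ˢ Set.Iic a) := by
    rw [← Measure.prod_restrict, Measure.restrict_univ]
  have hint : Integrable (Function.uncurry fun t v => npdf t * npdf (v + b * t))
      ((volume : Measure ℝ).prod (volume.restrict (Set.Iic a))) := by
    rw [h1]
    exact (int_conv b).restrict
  rw [integral_integral_swap hint]
  simp_rw [conv_npdf b]
  exact cdf_scale a _ (Real.sqrt_pos.2 (by positivity))

lemma int_prod_npdf (n : ℕ) :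
    Integrable (fun y : Fin n → ℝ => ∏ i, npdf (y i)) :=
  Integrable.fin_nat_prod fun _ => int_npdf

lemma keyp : ∀ (n : ℕ) (lam : Fin n → ℝ) (a : ℝ),
    (∫ z : Fin n → ℝ, (∏ i, npdf (z i)) * stdNormCdf (a + lam ⬝ᵥ z))
      = stdNormCdf (a / Real.sqrt (1 + lam ⬝ᵥ lam)) := by
  intro n
  induction n with
  | zero =>
      intro lam a
      simp only [dotProduct, Finset.univ_eq_empty, Finset.sum_empty, Finset.prod_empty, one_mul,
        add_zero]
      rw [integral_const, volume_pi]
      simp [Measure.real, Measure.pi_univ]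
  | succ n ih =>
      intro lam a
      set lam' : Fin n → ℝ := fun i => lam i.succ with hlam'
      have hdotnn : 0 ≤ lam' ⬝ᵥ lam' :=
        Finset.sum_nonneg fun i _ => mul_self_nonneg _
      have hσpos : (0:ℝ) < Real.sqrt (1 + lam' ⬝ᵥ lam') :=
        Real.sqrt_pos.2 (by linarith)
      set σ' := Real.sqrt (1 + lam' ⬝ᵥ lam') with hσ'
      have hσ'2 : σ' ^ 2 = 1 + lam' ⬝ᵥ lam' := Real.sq_sqrt (by linarith)
      have hdot : lam ⬝ᵥ lam = lam 0 * lam 0 + lam' ⬝ᵥ lam' := by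
        rw [dotProduct, Fin.sum_univ_succ]; rfl
      have hmG : AEStronglyMeasurable
          (fun x : ℝ × (Fin n → ℝ) => (npdf x.1 * ∏ i, npdf (x.2 i)) *
            stdNormCdf ((a + lam 0 * x.1) + lam' ⬝ᵥ x.2))
          (((volume : Measure ℝ)).prod (volume : Measure (Fin n → ℝ))) := by
        apply Measurable.aestronglyMeasurable
        apply Measurable.mul
        · exact (npdf_cont.measurable.comp measurable_fst).mul
            (Finset.measurable_prod Finset.univ fun i _ =>
              npdf_cont.measurable.comp ((measurable_pi_apply i).comp measurable_snd))
        · apply stdNormCdf_measurable.comp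
          apply Measurable.add
          · exact (measurable_fst.const_mul (lam 0)).const_add a
          · exact Finset.measurable_sum Finset.univ fun i _ =>
              (by fun_prop)
      have hint : Integrable
          (fun x : ℝ × (Fin n → ℝ) => (npdf x.1 * ∏ i, npdf (x.2 i)) *
            stdNormCdf ((a + lam 0 * x.1) + lam' ⬝ᵥ x.2))
          (((volume : Measure ℝ)).prod (volume : Measure (Fin n → ℝ))) := by
        apply Integrable.mono' (int_npdf.mul_prod (int_prod_npdf n)) hmG
        refine Filter.Eventually.of_forall fun x => ?_
        rw [Real.norm_eq_abs, abs_mul]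
        have h1 : 0 ≤ npdf x.1 * ∏ i, npdf (x.2 i) :=
          mul_nonneg (npdf_nonneg _) (Finset.prod_nonneg fun i _ => npdf_nonneg _)
        rw [abs_of_nonneg h1, abs_of_nonneg (stdNormCdf_nonneg _)]
        calc (npdf x.1 * ∏ i, npdf (x.2 i)) * stdNormCdf ((a + lam 0 * x.1) + lam' ⬝ᵥ x.2)
            ≤ (npdf x.1 * ∏ i, npdf (x.2 i)) * 1 :=
              mul_le_mul_of_nonneg_left (stdNormCdf_le_one _) h1
          _ = npdf x.1 * ∏ i, npdf (x.2 i) := mul_one _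
      calc (∫ z : Fin (n+1) → ℝ, (∏ i, npdf (z i)) * stdNormCdf (a + lam ⬝ᵥ z))
          = ∫ x : ℝ × (Fin n → ℝ), (npdf x.1 * ∏ i, npdf (x.2 i)) *
              stdNormCdf ((a + lam 0 * x.1) + lam' ⬝ᵥ x.2) := by
            rw [volume_pi, ← ((measurePreserving_piFinSuccAbove
              (fun _ : Fin (n+1) => (volume : Measure ℝ)) 0).symm).integral_comp']
            congr 1
            funext x
            simp_rw [MeasurableEquiv.piFinSuccAbove_symm_apply, Fin.insertNthEquiv,
              Equiv.coe_fn_mk, Fin.insertNth_zero]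
            congr 1
            · rw [Fin.prod_univ_succ]
              simp [Fin.cons_zero, Fin.cons_succ]
            · congr 1
              rw [dotProduct, Fin.sum_univ_succ, dotProduct]
              simp only [Fin.cons_zero, Fin.cons_succ, cast_eq]
              ring
        _ = ∫ t : ℝ, npdf t * stdNormCdf ((a + lam 0 * t) / σ') := by
            rw [MeasureTheory.Measure.volume_eq_prod, integral_prod _ hint]
            congr 1
            funext t
            simp_rw [mul_assoc, integral_const_mul]
            rw [ih lam' (a + lam 0 * t)]
        _ = stdNormCdf ((a / σ') / Real.sqrt (1 + (lam 0 / σ') ^ 2)) := by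
            have h2 : ∀ t : ℝ, (a + lam 0 * t) / σ' = a / σ' + (lam 0 / σ') * t := by
              intro t
              rw [add_div, mul_div_right_comm]
            simp_rw [h2]
            exact key1 (a / σ') (lam 0 / σ')
        _ = stdNormCdf (a / Real.sqrt (1 + lam ⬝ᵥ lam)) := by
            congr 1
            have h3 : 1 + (lam 0 / σ') ^ 2 = (1 + lam ⬝ᵥ lam) / σ' ^ 2 := by
              rw [div_pow, hσ'2, hdot]
              field_simp
              ring
            rw [div_div, h3, Real.sqrt_div (by nlinarith [hdot, hdotnn] : (0:ℝ) ≤ 1 + lam ⬝ᵥ lam),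
              Real.sqrt_sq hσpos.le, mul_comm, div_mul_cancel₀ _ hσpos.ne']

lemma npdf_pow (p : ℕ) :
    ((2 * Real.pi) ^ (-(1:ℝ)/2)) ^ (p : ℕ) = (2 * Real.pi) ^ (-(p:ℝ)/2) := by
  rw [← Real.rpow_natCast ((2 * Real.pi) ^ (-(1:ℝ)/2)) p, ← Real.rpow_mul (by positivity)]
  congr 1
  ring

lemma gaussPdf_std (p : ℕ) (z : Fin p → ℝ) :
    gaussPdf 0 (1 : Matrix (Fin p) (Fin p) ℝ) z = ∏ i, npdf (z i) := by
  unfold gaussPdf npdf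
  rw [Matrix.det_one, Real.one_rpow, mul_one, inv_one, Matrix.one_mulVec, sub_zero]
  rw [Finset.prod_mul_distrib, Finset.prod_const, Finset.card_univ, Fintype.card_fin, npdf_pow,
    ← Real.exp_sum]
  congr 2
  rw [dotProduct, Finset.mul_sum]
  exact Finset.sum_congr rfl fun i _ => by ring

lemma prod_shift (p : ℕ) (s z : Fin p → ℝ) :
    Real.exp (s ⬝ᵥ z) * ∏ i, npdf (z i)
      = Real.exp ((1/2 : ℝ) * (s ⬝ᵥ s)) * ∏ i, npdf (z i - s i) := by
  unfold npdf
  rw [Finset.prod_mul_distrib, Finset.prod_mul_distrib, Finset.prod_const,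
    ← Real.exp_sum, ← Real.exp_sum]
  have h : s ⬝ᵥ z + ∑ i, (-(z i)^2/2) = (1/2 : ℝ) * (s ⬝ᵥ s) + ∑ i, (-(z i - s i)^2/2) := by
    rw [dotProduct, dotProduct, Finset.mul_sum, ← Finset.sum_add_distrib,
      ← Finset.sum_add_distrib]
    exact Finset.sum_congr rfl fun i _ => by ring
  rw [mul_left_comm, ← Real.exp_add, h, Real.exp_add, mul_left_comm]

theorem stmt3 (p : ℕ) (hp : 0 < p) (lam : Fin p → ℝ)
    (δ : Fin p → ℝ) (hδ : δ = (Real.sqrt (1 + lam ⬝ᵥ lam))⁻¹ • lam) :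
    ∀ s : Fin p → ℝ,
      ∫ z : Fin p → ℝ,
          Real.exp (s ⬝ᵥ z) * (2 * gaussPdf 0 (1 : Matrix (Fin p) (Fin p) ℝ) z *
            stdNormCdf (lam ⬝ᵥ z))
        = 2 * Real.exp ((1 / 2) * (s ⬝ᵥ s)) * stdNormCdf (δ ⬝ᵥ s) := by
  intro s
  have h1 : ∀ z : Fin p → ℝ,
      Real.exp (s ⬝ᵥ z) * (2 * gaussPdf 0 (1 : Matrix (Fin p) (Fin p) ℝ) z *
        stdNormCdf (lam ⬝ᵥ z))
      = (2 * Real.exp ((1/2 : ℝ) * (s ⬝ᵥ s))) *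
          ((∏ i, npdf (z i - s i)) * stdNormCdf (lam ⬝ᵥ z)) := by
    intro z
    rw [gaussPdf_std]
    have := prod_shift p s z
    calc Real.exp (s ⬝ᵥ z) * (2 * (∏ i, npdf (z i)) * stdNormCdf (lam ⬝ᵥ z))
        = 2 * ((Real.exp (s ⬝ᵥ z) * ∏ i, npdf (z i)) * stdNormCdf (lam ⬝ᵥ z)) := by ring
      _ = 2 * ((Real.exp ((1/2 : ℝ) * (s ⬝ᵥ s)) * ∏ i, npdf (z i - s i)) *
            stdNormCdf (lam ⬝ᵥ z)) := by rw [this]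
      _ = (2 * Real.exp ((1/2 : ℝ) * (s ⬝ᵥ s))) *
            ((∏ i, npdf (z i - s i)) * stdNormCdf (lam ⬝ᵥ z)) := by ring
  simp_rw [h1]
  rw [integral_const_mul]
  have h2 : (∫ z : Fin p → ℝ, (∏ i, npdf (z i - s i)) * stdNormCdf (lam ⬝ᵥ z))
      = ∫ z : Fin p → ℝ, (∏ i, npdf (z i)) * stdNormCdf (lam ⬝ᵥ s + lam ⬝ᵥ z) := by
    rw [← integral_add_right_eq_self
      (fun z : Fin p → ℝ => (∏ i, npdf (z i)) * stdNormCdf (lam ⬝ᵥ s + lam ⬝ᵥ z)) (-s)]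
    congr 1
    funext z
    congr 1
    · congr 1
      rw [dotProduct_add, dotProduct_neg]
      ring
  rw [h2, keyp p lam (lam ⬝ᵥ s)]
  congr 2
  rw [hδ, smul_dotProduct, smul_eq_mul, div_eq_inv_mul]
end
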